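/- arXiv:2211.07949 — 2 statements merged into one kernel-verified Lean document; each statement's English description precedes it below -/
import Mathlib

section
/- Let S ≻ 0, W ≻ 0 be n×n real symmetric matrices and T ≥ 1 such that β_T · S⁻¹WS⁻¹ ⪯ I where β_T = ∑_{t=1}^T 1/t². Then the minimum over all sequences X₁,…,X_T of positive semidefinite matrices of J_T = ∑_{t=1}^T [tr(W X̄_t⁻¹) + tr(X_t)], with X̄_t = ∑_{k=1}^t X_k + tS, is attained at X_t = 0 for all t, with optimal value α_T · tr(WS⁻¹), where α_T = ∑_{t=1}^T 1/t. -/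
open Matrix BigOperators Finset Real
set_option maxHeartbeats 1000000

variable {n : ℕ}

lemma psd_trace_nonneg {M : Matrix (Fin n) (Fin n) ℝ} (hM : M.PosSemidef) :
    0 ≤ M.trace := by
  rw [Matrix.trace]
  apply Finset.sum_nonneg
  intro i _
  exact hM.diag_nonneg

lemma real_herm_transpose {M : Matrix (Fin n) (Fin n) ℝ} (hM : M.IsHermitian) :
    Mᵀ = M := by
  rw [← Matrix.conjTranspose_eq_transpose_of_trivial]; exact hM

open scoped MatrixOrder in
lemma psd_trace_mul_nonneg {A B : Matrix (Fin n) (Fin n) ℝ}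
    (hA : A.PosSemidef) (hB : B.PosSemidef) : 0 ≤ (A * B).trace := by
  have h1 : A = CFC.sqrt A * CFC.sqrt A := (CFC.sqrt_mul_sqrt_self A hA.nonneg).symm
  have h2 : (CFC.sqrt A * CFC.sqrt A * B).trace = (CFC.sqrt A * B * CFC.sqrt A).trace :=
    (Matrix.trace_mul_cycle (CFC.sqrt A) B (CFC.sqrt A)).symm
  have h3 : (CFC.sqrt A * B * CFC.sqrt A).PosSemidef := by
    have := hB.conjTranspose_mul_mul_same (CFC.sqrt A)
    rwa [(CFC.sqrt_nonneg A).posSemidef.1.eq] at this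
  calc (0:ℝ) ≤ (CFC.sqrt A * B * CFC.sqrt A).trace := psd_trace_nonneg h3
  _ = (A * B).trace := by rw [← h2, ← h1]

lemma posdef_smul {c : ℝ} (hc : 0 < c) {A : Matrix (Fin n) (Fin n) ℝ} (hA : A.PosDef) :
    (c • A).PosDef := by
  exact hA.smul hc

lemma key_ineq {M V Q : Matrix (Fin n) (Fin n) ℝ} (hM : M.PosDef) (hV : Vᵀ = V) :
    2 * (V * Q).trace - (Qᵀ * M * Q).trace ≤ (V * V * M⁻¹).trace := by
  have hdet : IsUnit M.det := isUnit_iff_ne_zero.mpr hM.det_pos.ne'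
  have hMi : M * M⁻¹ = 1 := Matrix.mul_nonsing_inv M hdet
  have hMsym : Mᵀ = M := real_herm_transpose hM.1
  have hMisym : (M⁻¹)ᵀ = M⁻¹ := by rw [Matrix.transpose_nonsing_inv, hMsym]
  set B := M⁻¹ * V - Q with hB
  have h0 : 0 ≤ (Bᵀ * M * B).trace := by
    have := hM.posSemidef.conjTranspose_mul_mul_same B
    rw [Matrix.conjTranspose_eq_transpose_of_trivial] at this
    exact psd_trace_nonneg this
  have hexp : (Bᵀ * M * B).trace
      = (V * V * M⁻¹).trace - 2 * (V * Q).trace + (Qᵀ * M * Q).trace := by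
    have hBt : Bᵀ = V * M⁻¹ - Qᵀ := by
      rw [hB, Matrix.transpose_sub, Matrix.transpose_mul, hMisym, hV]
    rw [hBt, hB]
    have e1 : (V * M⁻¹ - Qᵀ) * M * (M⁻¹ * V - Q)
        = V * M⁻¹ * M * M⁻¹ * V - V * M⁻¹ * M * Q - Qᵀ * M * M⁻¹ * V + Qᵀ * M * Q := by
      simp only [Matrix.sub_mul, Matrix.mul_sub]
      noncomm_ring
    have hMiM : M⁻¹ * M = 1 := Matrix.nonsing_inv_mul M hdet
    rw [e1]
    rw [Matrix.mul_assoc (V * M⁻¹) M M⁻¹, hMi, Matrix.mul_one]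
    rw [Matrix.mul_assoc V M⁻¹ M, hMiM, Matrix.mul_one]
    rw [Matrix.mul_assoc Qᵀ M M⁻¹, hMi, Matrix.mul_one]
    rw [Matrix.trace_add, Matrix.trace_sub, Matrix.trace_sub]
    have c1 : (V * M⁻¹ * V).trace = (V * V * M⁻¹).trace := by
      rw [Matrix.trace_mul_cycle V M⁻¹ V, Matrix.trace_mul_cycle V V M⁻¹]
    have c2 : (Qᵀ * V).trace = (V * Q).trace := by
      rw [← Matrix.trace_transpose (Qᵀ * V), Matrix.transpose_mul, Matrix.transpose_transpose, hV]
    rw [c1, c2]; ring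
  linarith [h0, hexp.symm.le]

lemma step_bound {n : ℕ} {S W M V : Matrix (Fin n) (Fin n) ℝ} (hS : S.PosDef)
    (hM : M.PosDef) (hVsym : Vᵀ = V) (hVV : V * V = W) {τ : ℝ} (hτ : τ ≠ 0) :
    2 * ((1/τ) * (W * S⁻¹).trace) - (1/τ)^2 * (M * (S⁻¹ * W * S⁻¹)).trace
      ≤ (W * M⁻¹).trace := by
  have hSisym : (S⁻¹)ᵀ = S⁻¹ := real_herm_transpose hS.inv.1
  have h1 := key_ineq hM hVsym (Q := (1/τ) • (S⁻¹ * V))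
  rw [hVV] at h1
  have hVQ : (V * ((1/τ) • (S⁻¹ * V))).trace = (1/τ) * (W * S⁻¹).trace := by
    rw [Matrix.mul_smul, Matrix.trace_smul, smul_eq_mul, ← Matrix.mul_assoc,
      Matrix.trace_mul_cycle V S⁻¹ V, hVV]
  have hQt : ((1/τ) • (S⁻¹ * V))ᵀ = (1/τ) • (V * S⁻¹) := by
    rw [Matrix.transpose_smul, Matrix.transpose_mul, hVsym, hSisym]
  have e2 : (V * S⁻¹ * M * (S⁻¹ * V)).trace = (M * (S⁻¹ * W * S⁻¹)).trace := by
    rw [Matrix.trace_mul_cycle (V * S⁻¹) M (S⁻¹ * V),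
      Matrix.trace_mul_cycle (S⁻¹ * V) (V * S⁻¹) M,
      Matrix.mul_assoc M, Matrix.mul_assoc S⁻¹ V (V * S⁻¹),
      ← Matrix.mul_assoc V V S⁻¹, hVV, Matrix.mul_assoc S⁻¹ W S⁻¹]
  have hQMQ : (((1/τ) • (S⁻¹ * V))ᵀ * M * ((1/τ) • (S⁻¹ * V))).trace
      = (1/τ)^2 * (M * (S⁻¹ * W * S⁻¹)).trace := by
    rw [hQt, Matrix.smul_mul, Matrix.smul_mul, Matrix.mul_smul, smul_smul,
      Matrix.trace_smul, smul_eq_mul, Matrix.mul_assoc (V * S⁻¹) M (S⁻¹ * V)]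
    rw [show V * S⁻¹ * M * (S⁻¹ * V) = V * S⁻¹ * (M * (S⁻¹ * V)) from
      Matrix.mul_assoc _ _ _] at e2
    rw [e2, pow_two]
  rw [hVQ, hQMQ] at h1
  linarith

theorem stmt_12 (n T : ℕ) (hT : 1 ≤ T)
    (S W : Matrix (Fin n) (Fin n) ℝ) (hS : S.PosDef) (hW : W.PosDef)
    (hfeas : ((1 : Matrix (Fin n) (Fin n) ℝ)
        - (∑ t ∈ Finset.Icc 1 T, (1:ℝ)/(t:ℝ)^2) • (S⁻¹ * W * S⁻¹)).PosSemidef) :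
    IsLeast {J : ℝ | ∃ X : ℕ → Matrix (Fin n) (Fin n) ℝ,
        (∀ t ∈ Finset.Icc 1 T, (X t).PosSemidef) ∧
        J = ∑ t ∈ Finset.Icc 1 T,
          ((W * ((∑ k ∈ Finset.Icc 1 t, X k) + (t:ℝ) • S)⁻¹).trace + (X t).trace)}
      ((∑ t ∈ Finset.Icc 1 T, (1:ℝ)/(t:ℝ)) * (W * S⁻¹).trace)
    ∧ (∑ t ∈ Finset.Icc 1 T,
        ((W * ((t:ℝ) • S)⁻¹).trace + (0 : Matrix (Fin n) (Fin n) ℝ).trace))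
      = (∑ t ∈ Finset.Icc 1 T, (1:ℝ)/(t:ℝ)) * (W * S⁻¹).trace := by
  have hSdet : IsUnit S.det := isUnit_iff_ne_zero.mpr hS.det_pos.ne'
  have hSSi : S * S⁻¹ = 1 := Matrix.mul_nonsing_inv S hSdet
  have hSisym : (S⁻¹)ᵀ = S⁻¹ := real_herm_transpose hS.inv.1
  have hP : (S⁻¹ * W * S⁻¹).PosSemidef := by
    have := hW.posSemidef.conjTranspose_mul_mul_same S⁻¹
    rwa [Matrix.conjTranspose_eq_transpose_of_trivial, hSisym] at this
  -- the value at X = 0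
  have eq0 : (∑ t ∈ Finset.Icc 1 T,
        ((W * ((t:ℝ) • S)⁻¹).trace + (0 : Matrix (Fin n) (Fin n) ℝ).trace))
      = (∑ t ∈ Finset.Icc 1 T, (1:ℝ)/(t:ℝ)) * (W * S⁻¹).trace := by
    rw [Finset.sum_mul]
    refine Finset.sum_congr rfl fun t ht => ?_
    have ht1 : 1 ≤ t := (Finset.mem_Icc.mp ht).1
    have htne : (t:ℝ) ≠ 0 := Nat.cast_ne_zero.mpr (Nat.one_le_iff_ne_zero.mp ht1)
    letI := invertibleOfNonzero htne
    rw [Matrix.inv_smul (A := S) (k := (t:ℝ)) hSdet, invOf_eq_inv, Matrix.mul_smul,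
      Matrix.trace_smul, Matrix.trace_zero, smul_eq_mul, add_zero, one_div]
  refine ⟨⟨?_, ?_⟩, eq0⟩
  · -- membership: X = 0
    refine ⟨fun _ => 0, fun _ _ => Matrix.PosSemidef.zero, ?_⟩
    rw [← eq0]
    refine Finset.sum_congr rfl fun t ht => ?_
    simp
  · -- lower bound
    rintro J ⟨X, hX, rfl⟩
    have hXk : ∀ t ∈ Finset.Icc 1 T, ∀ k ∈ Finset.Icc 1 t, (X k).PosSemidef := by
      intro t ht k hk
      exact hX k (Finset.mem_Icc.mpr ⟨(Finset.mem_Icc.mp hk).1,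
        le_trans (Finset.mem_Icc.mp hk).2 (Finset.mem_Icc.mp ht).2⟩)
    have hMpos : ∀ t ∈ Finset.Icc 1 T,
        ((∑ k ∈ Finset.Icc 1 t, X k) + (t:ℝ) • S).PosDef := by
      intro t ht
      have h1 : (∑ k ∈ Finset.Icc 1 t, X k).PosSemidef :=
        Finset.sum_induction X Matrix.PosSemidef
          (fun a b ha hb => ha.add hb) Matrix.PosSemidef.zero (hXk t ht)
      have ht1 : 1 ≤ t := (Finset.mem_Icc.mp ht).1
      have htpos : (0:ℝ) < (t:ℝ) := by exact_mod_cast Nat.lt_of_lt_of_le Nat.zero_lt_one ht1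
      exact Matrix.PosDef.posSemidef_add h1 (posdef_smul htpos hS)
    -- trace of Mt * P
    have htrMP : ∀ t ∈ Finset.Icc 1 T,
        (((∑ k ∈ Finset.Icc 1 t, X k) + (t:ℝ) • S) * (S⁻¹ * W * S⁻¹)).trace
          = (∑ k ∈ Finset.Icc 1 t, (X k * (S⁻¹ * W * S⁻¹)).trace)
            + (t:ℝ) * (W * S⁻¹).trace := by
      intro t ht
      rw [Matrix.add_mul, Matrix.trace_add, Matrix.sum_mul, Matrix.trace_sum,
        Matrix.smul_mul, Matrix.trace_smul, smul_eq_mul,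
        show S * (S⁻¹ * W * S⁻¹) = W * S⁻¹ from by
          rw [← Matrix.mul_assoc, ← Matrix.mul_assoc, hSSi, Matrix.one_mul]]
    -- per-step lower bound
    have hkey : ∀ t ∈ Finset.Icc 1 T,
        (1/(t:ℝ)) * (W * S⁻¹).trace
            - (1/(t:ℝ))^2 * (∑ k ∈ Finset.Icc 1 t, (X k * (S⁻¹ * W * S⁻¹)).trace)
          ≤ (W * ((∑ k ∈ Finset.Icc 1 t, X k) + (t:ℝ) • S)⁻¹).trace := by
      intro t ht
      have ht1 : 1 ≤ t := (Finset.mem_Icc.mp ht).1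
      have htne : (t:ℝ) ≠ 0 := Nat.cast_ne_zero.mpr (Nat.one_le_iff_ne_zero.mp ht1)
      open scoped MatrixOrder in
      have h1 := step_bound hS (hMpos t ht)
        (real_herm_transpose (CFC.sqrt_nonneg W).posSemidef.1)
        (CFC.sqrt_mul_sqrt_self W hW.posSemidef.nonneg) htne
      rw [htrMP t ht] at h1
      have harith : (1/(t:ℝ))^2 * ((t:ℝ) * (W * S⁻¹).trace)
          = (1/(t:ℝ)) * (W * S⁻¹).trace := by
        field_simp
      nlinarith [h1, harith]
    -- nonnegativity of traces
    have htrXP : ∀ k ∈ Finset.Icc 1 T, 0 ≤ (X k * (S⁻¹ * W * S⁻¹)).trace := fun k hk =>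
      psd_trace_mul_nonneg (hX k hk) hP
    have hsS : ∀ t ∈ Finset.Icc 1 T,
        (∑ k ∈ Finset.Icc 1 t, (X k * (S⁻¹ * W * S⁻¹)).trace)
          ≤ ∑ k ∈ Finset.Icc 1 T, (X k * (S⁻¹ * W * S⁻¹)).trace := by
      intro t ht
      apply Finset.sum_le_sum_of_subset_of_nonneg
      · exact Finset.Icc_subset_Icc_right (Finset.mem_Icc.mp ht).2
      · intro k hk _; exact htrXP k hk
    have hbS : (∑ t ∈ Finset.Icc 1 T, (1:ℝ)/(t:ℝ)^2)
          * (∑ k ∈ Finset.Icc 1 T, (X k * (S⁻¹ * W * S⁻¹)).trace)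
        ≤ ∑ k ∈ Finset.Icc 1 T, (X k).trace := by
      rw [Finset.mul_sum]
      apply Finset.sum_le_sum
      intro k hk
      have h0 : 0 ≤ ((X k) * ((1 : Matrix (Fin n) (Fin n) ℝ)
          - (∑ t ∈ Finset.Icc 1 T, (1:ℝ)/(t:ℝ)^2) • (S⁻¹ * W * S⁻¹))).trace :=
        psd_trace_mul_nonneg (hX k hk) hfeas
      have hexp : ((X k) * ((1 : Matrix (Fin n) (Fin n) ℝ)
            - (∑ t ∈ Finset.Icc 1 T, (1:ℝ)/(t:ℝ)^2) • (S⁻¹ * W * S⁻¹))).trace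
          = (X k).trace - (∑ t ∈ Finset.Icc 1 T, (1:ℝ)/(t:ℝ)^2)
              * (X k * (S⁻¹ * W * S⁻¹)).trace := by
        rw [Matrix.mul_sub, Matrix.mul_one, Matrix.mul_smul, Matrix.trace_sub,
          Matrix.trace_smul, smul_eq_mul]
      linarith [h0, hexp.le]
    -- assemble
    have hstep : ∑ t ∈ Finset.Icc 1 T,
          ((1/(t:ℝ)) * (W * S⁻¹).trace
            - (1/(t:ℝ))^2 * (∑ k ∈ Finset.Icc 1 t, (X k * (S⁻¹ * W * S⁻¹)).trace)
            + (X t).trace)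
        ≤ ∑ t ∈ Finset.Icc 1 T,
            ((W * ((∑ k ∈ Finset.Icc 1 t, X k) + (t:ℝ) • S)⁻¹).trace + (X t).trace) := by
      apply Finset.sum_le_sum
      intro t ht
      have := hkey t ht
      linarith
    have hsum2 : ∑ t ∈ Finset.Icc 1 T, (1/(t:ℝ))^2
          * (∑ k ∈ Finset.Icc 1 t, (X k * (S⁻¹ * W * S⁻¹)).trace)
        ≤ (∑ t ∈ Finset.Icc 1 T, (1:ℝ)/(t:ℝ)^2)
          * (∑ k ∈ Finset.Icc 1 T, (X k * (S⁻¹ * W * S⁻¹)).trace) := by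
      rw [Finset.sum_mul]
      apply Finset.sum_le_sum
      intro t ht
      have h1 : (0:ℝ) ≤ (1/(t:ℝ))^2 := sq_nonneg _
      have h2 := hsS t ht
      have e : ((1:ℝ)/(t:ℝ))^2 = 1/(t:ℝ)^2 := by rw [div_pow, one_pow]
      rw [← e]
      exact mul_le_mul_of_nonneg_left h2 h1
    have hsplit : ∑ t ∈ Finset.Icc 1 T,
          ((1/(t:ℝ)) * (W * S⁻¹).trace
            - (1/(t:ℝ))^2 * (∑ k ∈ Finset.Icc 1 t, (X k * (S⁻¹ * W * S⁻¹)).trace)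
            + (X t).trace)
        = (∑ t ∈ Finset.Icc 1 T, (1:ℝ)/(t:ℝ)) * (W * S⁻¹).trace
          - (∑ t ∈ Finset.Icc 1 T, (1/(t:ℝ))^2
              * (∑ k ∈ Finset.Icc 1 t, (X k * (S⁻¹ * W * S⁻¹)).trace))
          + ∑ t ∈ Finset.Icc 1 T, (X t).trace := by
      rw [Finset.sum_mul, ← Finset.sum_sub_distrib, ← Finset.sum_add_distrib]
    linarith [hstep, hsum2, hbS, hsplit.symm.le]
end

section
/- Let n ≥ 1, T ≥ 1, let {e_k} ∪ {n_j}_{j=1}^m be an orthonormal basis of ℝⁿ, S = ∑_k λ_k e_k e_kᵀ with λ_k > 0, W ≻ 0 with positive definite square root W̃, and X₁ = √T ∑_j (n_jᵀW̃n_j) n_j n_jᵀ, X_t = 0 for t ≥ 2. Then J_T = ∑_{t=1}^T [tr(W(X₁ + tS)⁻¹) + tr(X_t)] ≤ √T·(∑_j n_jᵀWn_j/(n_jᵀW̃n_j) + ∑_j n_jᵀW̃n_j) + γ_T·∑_k e_kᵀWe_k/λ_k, where γ_T = ∑_{t=1}^T 1/t. -/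
open Matrix BigOperators Finset Real

lemma vmv_mul_vmv {n : ℕ} (a b c d : Fin n → ℝ) :
    vecMulVec a b * vecMulVec c d = (b ⬝ᵥ c) • vecMulVec a d := by
  ext i j
  simp only [Matrix.mul_apply, vecMulVec_apply, Matrix.smul_apply, dotProduct,
    smul_eq_mul, Finset.sum_mul, Finset.mul_sum]
  exact Finset.sum_congr rfl fun k _ => by ring

lemma trace_mul_vmv {n : ℕ} (W : Matrix (Fin n) (Fin n) ℝ) (a : Fin n → ℝ) :
    (W * vecMulVec a a).trace = a ⬝ᵥ (W *ᵥ a) := by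
  simp only [Matrix.trace, Matrix.diag_apply, Matrix.mul_apply, vecMulVec_apply,
    dotProduct, Matrix.mulVec, Finset.mul_sum]
  exact Finset.sum_congr rfl fun i _ => Finset.sum_congr rfl fun j _ => by ring

lemma trace_vmv {n : ℕ} (a : Fin n → ℝ) : (vecMulVec a a).trace = a ⬝ᵥ a := by
  simp [Matrix.trace, vecMulVec_apply, dotProduct]

lemma complete_sum {n m p : ℕ} (hmp : m + p = n)
    (nv : Fin m → (Fin n → ℝ)) (ev : Fin p → (Fin n → ℝ))
    (hon : ∀ j j', nv j ⬝ᵥ nv j' = if j = j' then 1 else 0)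
    (hoe : ∀ k k', ev k ⬝ᵥ ev k' = if k = k' then 1 else 0)
    (hne : ∀ j k, nv j ⬝ᵥ ev k = 0) :
    (∑ j, vecMulVec (nv j) (nv j)) + (∑ k, vecMulVec (ev k) (ev k)) = 1 := by
  set v : Fin m ⊕ Fin p → Fin n → ℝ := Sum.elim nv ev with hv
  have hvv : ∀ i i', v i ⬝ᵥ v i' = if i = i' then 1 else 0 := by
    rintro (j | k) (j' | k') <;>
      simp [v, hon, hoe, hne, dotProduct_comm (ev _) (nv _)]
  let e : Fin m ⊕ Fin p ≃ Fin n := finSumFinEquiv.trans (finCongr hmp)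
  let U : Matrix (Fin n) (Fin n) ℝ := Matrix.of fun i j => v (e.symm i) j
  have h1 : U * Uᵀ = 1 := by
    ext i i'
    simp only [Matrix.mul_apply, Matrix.transpose_apply, Matrix.one_apply, U,
      Matrix.of_apply]
    rw [show ∑ j, v (e.symm i) j * v (e.symm i') j = v (e.symm i) ⬝ᵥ v (e.symm i')
      from rfl, hvv]
    simp
  have h2 : Uᵀ * U = 1 := mul_eq_one_comm.mp h1
  have h3 : ∑ i : Fin n, vecMulVec (v (e.symm i)) (v (e.symm i)) = 1 := by
    rw [← h2]
    ext a b
    simp [Matrix.mul_apply, Matrix.sum_apply, vecMulVec_apply, U, mul_comm]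
  rw [Equiv.sum_comp e.symm (fun s => vecMulVec (v s) (v s))] at h3
  rw [Fintype.sum_sum_type] at h3
  simpa [v] using h3

theorem stmt_16 (n m p T : ℕ) (hn : 1 ≤ n) (hT : 1 ≤ T) (hmp : m + p = n)
    (nv : Fin m → (Fin n → ℝ)) (ev : Fin p → (Fin n → ℝ))
    (hon : ∀ j j', nv j ⬝ᵥ nv j' = if j = j' then 1 else 0)
    (hoe : ∀ k k', ev k ⬝ᵥ ev k' = if k = k' then 1 else 0)
    (hne : ∀ j k, nv j ⬝ᵥ ev k = 0)
    (lam : Fin p → ℝ) (hlam : ∀ k, 0 < lam k)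
    (S : Matrix (Fin n) (Fin n) ℝ)
    (hS : S = ∑ k, lam k • Matrix.vecMulVec (ev k) (ev k))
    (W Wt : Matrix (Fin n) (Fin n) ℝ) (hW : W.PosDef) (hWt : Wt.PosDef)
    (hWtsq : Wt * Wt = W)
    (X1 : Matrix (Fin n) (Fin n) ℝ)
    (hX1 : X1 = Real.sqrt T •
      ∑ j, (nv j ⬝ᵥ (Wt *ᵥ nv j)) • Matrix.vecMulVec (nv j) (nv j))
    (X : ℕ → Matrix (Fin n) (Fin n) ℝ)
    (hXone : X 1 = X1) (hXt : ∀ t, 2 ≤ t → X t = 0) :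
    ∑ t ∈ Finset.Icc 1 T, ((W * (X1 + (t:ℝ) • S)⁻¹).trace + (X t).trace)
    ≤ Real.sqrt T *
        ((∑ j, (nv j ⬝ᵥ (W *ᵥ nv j)) / (nv j ⬝ᵥ (Wt *ᵥ nv j)))
          + ∑ j, nv j ⬝ᵥ (Wt *ᵥ nv j))
      + (∑ t ∈ Finset.Icc 1 T, (1:ℝ)/(t:ℝ)) * ∑ k, (ev k ⬝ᵥ (W *ᵥ ev k)) / lam k := by
  set c : Fin m → ℝ := fun j => nv j ⬝ᵥ Wt *ᵥ nv j with hcdef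
  have hTpos : (0:ℝ) < T := by exact_mod_cast hT
  have hst : (0:ℝ) < Real.sqrt T := Real.sqrt_pos.mpr hTpos
  have hnz : ∀ j, nv j ≠ 0 := by
    intro j h
    have := hon j j
    simp [h] at this
  have hc : ∀ j, 0 < c j := fun j => by
    have := hWt.dotProduct_mulVec_pos (hnz j)
    simpa using this
  have key : ∀ t : ℕ, 1 ≤ t → (W * (X1 + (t:ℝ) • S)⁻¹).trace
      = (Real.sqrt T)⁻¹ * ∑ j, (nv j ⬝ᵥ W *ᵥ nv j) / c j
        + (1/(t:ℝ)) * ∑ k, (ev k ⬝ᵥ W *ᵥ ev k) / lam k := by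
    intro t ht
    have htp : (0:ℝ) < (t:ℝ) := by exact_mod_cast ht
    have hαnz : ∀ j, Real.sqrt T * c j ≠ 0 := fun j => ne_of_gt (mul_pos hst (hc j))
    have hβnz : ∀ k, (t:ℝ) * lam k ≠ 0 := fun k =>
      ne_of_gt (mul_pos htp (hlam k))
    set B : Matrix (Fin n) (Fin n) ℝ :=
      (∑ j, (Real.sqrt T * c j)⁻¹ • vecMulVec (nv j) (nv j))
      + ∑ k, ((t:ℝ) * lam k)⁻¹ • vecMulVec (ev k) (ev k) with hB
    have hen : ∀ k j, ev k ⬝ᵥ nv j = 0 := fun k j => by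
      rw [dotProduct_comm]; exact hne j k
    have hMB : (X1 + (t:ℝ) • S) * B = 1 := by
      have hM : X1 + (t:ℝ) • S
          = (∑ j, (Real.sqrt T * c j) • vecMulVec (nv j) (nv j))
            + ∑ k, ((t:ℝ) * lam k) • vecMulVec (ev k) (ev k) := by
        rw [hX1, hS]
        rw [Finset.smul_sum, Finset.smul_sum]
        congr 1 <;> exact Finset.sum_congr rfl fun i _ => by rw [smul_smul]
      rw [hM, hB]
      simp only [Matrix.add_mul, Matrix.mul_add, Matrix.sum_mul, Matrix.mul_sum,
        Matrix.smul_mul, Matrix.mul_smul, vmv_mul_vmv, hon, hoe, hne, hen,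
        smul_smul, ite_smul, one_smul, zero_smul, smul_zero, smul_ite,
        Finset.sum_ite_eq', Finset.mem_univ, if_true, Finset.sum_const_zero,
        add_zero, zero_add]
      rw [← complete_sum hmp nv ev hon hoe hne]
      congr 1 <;> exact Finset.sum_congr rfl fun i _ => by
        rw [inv_mul_cancel₀ (by first | exact hαnz i | exact hβnz i), one_smul]
    rw [Matrix.inv_eq_right_inv hMB, hB]
    rw [Matrix.mul_add, Matrix.trace_add, Matrix.mul_sum, Matrix.mul_sum,
      Matrix.trace_sum, Matrix.trace_sum]
    simp only [Matrix.mul_smul, Matrix.trace_smul, trace_mul_vmv, smul_eq_mul]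
    rw [Finset.mul_sum, Finset.mul_sum]
    congr 1 <;> refine Finset.sum_congr rfl fun i _ => ?_
    · rw [mul_inv, div_eq_mul_inv]; ring
    · rw [mul_inv, div_eq_mul_inv]; ring
  have hXtrace : ∀ t ∈ Finset.Icc 1 T, t ≠ 1 → (X t).trace = 0 := by
    intro t htm ht1
    have : 2 ≤ t := by
      rcases Finset.mem_Icc.mp htm with ⟨h1, _⟩
      omega
    rw [hXt t this, Matrix.trace_zero]
  have hX1trace : (X 1).trace = Real.sqrt T * ∑ j, c j := by
    rw [hXone, hX1, Matrix.trace_smul, Matrix.trace_sum]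
    simp only [Matrix.trace_smul, trace_vmv, smul_eq_mul]
    congr 1
    exact Finset.sum_congr rfl fun j _ => by rw [hon]; simp; rfl
  have hsum : ∑ t ∈ Finset.Icc 1 T, ((W * (X1 + (t:ℝ) • S)⁻¹).trace + (X t).trace)
      = Real.sqrt T * (∑ j, (nv j ⬝ᵥ W *ᵥ nv j) / c j)
        + (∑ t ∈ Finset.Icc 1 T, (1:ℝ)/(t:ℝ)) * ∑ k, (ev k ⬝ᵥ W *ᵥ ev k) / lam k
        + Real.sqrt T * ∑ j, c j := by
    rw [Finset.sum_add_distrib]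
    have h2 : ∑ t ∈ Finset.Icc 1 T, (X t).trace = Real.sqrt T * ∑ j, c j := by
      rw [Finset.sum_eq_single 1 hXtrace (by simp; omega)]
      exact hX1trace
    have h1 : ∑ t ∈ Finset.Icc 1 T, (W * (X1 + (t:ℝ) • S)⁻¹).trace
        = Real.sqrt T * (∑ j, (nv j ⬝ᵥ W *ᵥ nv j) / c j)
          + (∑ t ∈ Finset.Icc 1 T, (1:ℝ)/(t:ℝ)) * ∑ k, (ev k ⬝ᵥ W *ᵥ ev k) / lam k := by
      rw [Finset.sum_congr rfl (fun t htm => key t (Finset.mem_Icc.mp htm).1)]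
      rw [Finset.sum_add_distrib, Finset.sum_const, Nat.card_Icc]
      simp only [Nat.add_sub_cancel, nsmul_eq_mul]
      rw [Finset.sum_mul]
      congr 1
      rw [← mul_assoc]
      congr 1
      rw [← Real.mul_self_sqrt (le_of_lt hTpos)]
      field_simp
      rw [Real.sqrt_sq hst.le]
    rw [h1, h2]
  rw [hsum]
  have : Real.sqrt T *
        ((∑ j, (nv j ⬝ᵥ (W *ᵥ nv j)) / (nv j ⬝ᵥ (Wt *ᵥ nv j)))
          + ∑ j, nv j ⬝ᵥ (Wt *ᵥ nv j))
      + (∑ t ∈ Finset.Icc 1 T, (1:ℝ)/(t:ℝ)) * ∑ k, (ev k ⬝ᵥ (W *ᵥ ev k)) / lam k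
      = Real.sqrt T * (∑ j, (nv j ⬝ᵥ W *ᵥ nv j) / c j)
        + (∑ t ∈ Finset.Icc 1 T, (1:ℝ)/(t:ℝ)) * ∑ k, (ev k ⬝ᵥ W *ᵥ ev k) / lam k
        + Real.sqrt T * ∑ j, c j := by
    simp only [hcdef]; ring
  rw [this]
end
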